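/- If the weighted digraph with adjacency matrix A is strongly connected and at least one pinning gain b_i is strictly positive, then the matrix L + B is an irreducibly diagonally dominant matrix with nonpositive off-diagonal entries and, in particular, L + B is nonsingular (invertible). -/

import Mathlib

open Matrix Finset

/-- If the weighted digraph with adjacency matrix `A` is strongly
connected and at least one pinning gain `b i` is strictly positive, then `L + B` is an
irreducibly diagonally dominant matrix with nonpositive off-diagonal entries; in
particular `L + B` is nonsingular. -/
theorem lplusB_irreducibly_diagonally_dominant_and_nonsingular
    {N : ℕ} (hN : 0 < N) (A : Matrix (Fin N) (Fin N) ℝ)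
    (hA : ∀ i j, 0 ≤ A i j) (hAdiag : ∀ i, A i i = 0)
    (b : Fin N → ℝ) (hb : ∀ i, 0 ≤ b i)
    (hconn : ∀ i j : Fin N, i ≠ j →
      Relation.TransGen (fun u v : Fin N => 0 < A v u) i j)
    (hbpos : ∃ i, 0 < b i)
    (L B : Matrix (Fin N) (Fin N) ℝ)
    (hL : L = Matrix.diagonal (fun i => ∑ j, A i j) - A)
    (hB : B = Matrix.diagonal b) :
    (∀ i j, i ≠ j → (L + B) i j ≤ 0) ∧
    (∀ i, ∑ j ∈ Finset.univ.erase i, |(L + B) i j| ≤ |(L + B) i i|) ∧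
    (∃ i, ∑ j ∈ Finset.univ.erase i, |(L + B) i j| < |(L + B) i i|) ∧
    (∀ i j : Fin N, i ≠ j →
      Relation.TransGen (fun u v : Fin N => (L + B) v u ≠ 0) i j) ∧
    IsUnit (L + B) := by
  subst hL hB
  set M : Matrix (Fin N) (Fin N) ℝ :=
    Matrix.diagonal (fun i => ∑ j, A i j) - A + Matrix.diagonal b with hM
  have hMoff : ∀ i j : Fin N, i ≠ j → M i j = -A i j := by
    intro i j hij
    simp [hM, Matrix.add_apply, Matrix.sub_apply, Matrix.diagonal_apply_ne _ hij]
  have hMdiag : ∀ i, M i i = (∑ j, A i j) + b i := by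
    intro i
    simp [hM, Matrix.add_apply, Matrix.sub_apply, hAdiag i]
  have hdnn : ∀ i, 0 ≤ ∑ j, A i j := fun i => Finset.sum_nonneg fun j _ => hA i j
  have hrowsum : ∀ i : Fin N, ∑ j ∈ Finset.univ.erase i, |M i j| = ∑ j, A i j := by
    intro i
    have : ∀ j ∈ Finset.univ.erase i, |M i j| = A i j := by
      intro j hj
      rw [hMoff i j (Finset.ne_of_mem_erase hj).symm, abs_neg, abs_of_nonneg (hA i j)]
    rw [Finset.sum_congr rfl this, Finset.sum_erase_eq_sub (Finset.mem_univ i),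
      hAdiag, sub_zero]
  have hdiagabs : ∀ i, |M i i| = (∑ j, A i j) + b i := by
    intro i
    rw [hMdiag]
    exact abs_of_nonneg (by have := hdnn i; have := hb i; linarith)
  refine ⟨?_, ?_, ?_, ?_, ?_⟩
  · intro i j hij
    rw [hMoff i j hij]
    linarith [hA i j]
  · intro i
    rw [hrowsum, hdiagabs]
    linarith [hb i]
  · obtain ⟨i, hi⟩ := hbpos
    refine ⟨i, ?_⟩
    rw [hrowsum, hdiagabs]
    linarith
  · intro i j hij
    refine Relation.TransGen.mono ?_ i j (hconn i j hij)
    intro u v huv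
    have hne : v ≠ u := by
      intro h
      rw [h, hAdiag] at huv
      exact lt_irrefl 0 huv
    rw [hMoff v u hne]
    intro h
    rw [neg_eq_zero] at h
    rw [h] at huv
    exact lt_irrefl 0 huv
  · -- nonsingularity
    have hdet : M.det ≠ 0 := by
      intro hdet0
      obtain ⟨x, hx0, hxM⟩ := Matrix.exists_mulVec_eq_zero_iff.2 hdet0
      obtain ⟨i0, -, hi0max⟩ := Finset.exists_max_image Finset.univ (fun i => |x i|)
        ⟨⟨0, hN⟩, Finset.mem_univ _⟩
      set c := |x i0| with hc
      have hmax : ∀ j, |x j| ≤ c := fun j => hi0max j (Finset.mem_univ j)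
      have hcpos : 0 < c := by
        obtain ⟨k, hk⟩ := Function.ne_iff.mp hx0
        exact lt_of_lt_of_le (abs_pos.mpr hk) (hmax k)
      have key : ∀ i : Fin N, |x i| = c → b i = 0 ∧ ∀ j, 0 < A i j → |x j| = c := by
        intro i hi
        have hrow : ∑ j, M i j * x j = 0 := by
          have := congrFun hxM i
          simpa [Matrix.mulVec, dotProduct] using this
        have hsplit : M i i * x i + ∑ j ∈ Finset.univ.erase i, M i j * x j =
            ∑ j, M i j * x j := Finset.add_sum_erase _ (fun j => M i j * x j) (Finset.mem_univ i)
        have heq : ((∑ j, A i j) + b i) * x i = ∑ j ∈ Finset.univ.erase i, A i j * x j := by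
          have hoff : ∑ j ∈ Finset.univ.erase i, M i j * x j =
              ∑ j ∈ Finset.univ.erase i, -(A i j * x j) := by
            refine Finset.sum_congr rfl fun j hj => ?_
            rw [hMoff i j (Finset.ne_of_mem_erase hj).symm, neg_mul]
          rw [hrow] at hsplit
          rw [hoff, Finset.sum_neg_distrib] at hsplit
          rw [← hMdiag]
          linarith
        have hsumabs : |∑ j ∈ Finset.univ.erase i, A i j * x j| ≤
            ∑ j ∈ Finset.univ.erase i, A i j * |x j| := by
          refine le_trans (Finset.abs_sum_le_sum_abs _ _) ?_
          refine Finset.sum_le_sum fun j _ => ?_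
          rw [abs_mul, abs_of_nonneg (hA i j)]
        have hsum_le : ∑ j ∈ Finset.univ.erase i, A i j * |x j| ≤
            (∑ j, A i j) * c := by
          calc ∑ j ∈ Finset.univ.erase i, A i j * |x j|
              ≤ ∑ j ∈ Finset.univ.erase i, A i j * c :=
                Finset.sum_le_sum fun j _ => mul_le_mul_of_nonneg_left (hmax j) (hA i j)
            _ = (∑ j ∈ Finset.univ.erase i, A i j) * c := by rw [Finset.sum_mul]
            _ = (∑ j, A i j) * c := by
                rw [Finset.sum_erase_eq_sub (Finset.mem_univ i), hAdiag, sub_zero]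
        have hlhs : |((∑ j, A i j) + b i) * x i| = ((∑ j, A i j) + b i) * c := by
          rw [abs_mul, hi, abs_of_nonneg (by have := hdnn i; have := hb i; linarith)]
        have hchain : ((∑ j, A i j) + b i) * c ≤ (∑ j, A i j) * c := by
          rw [← hlhs, heq]
          exact le_trans hsumabs hsum_le
        have hb0 : b i = 0 := by
          have : b i * c ≤ 0 := by nlinarith
          nlinarith [hb i, hcpos]
        refine ⟨hb0, ?_⟩
        -- all inequalities are equalities; each term A i j * (c - |x j|) = 0
        have hge : (∑ j, A i j) * c ≤ ∑ j ∈ Finset.univ.erase i, A i j * |x j| := by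
          calc (∑ j, A i j) * c = ((∑ j, A i j) + b i) * c := by rw [hb0]; ring
            _ = |((∑ j, A i j) + b i) * x i| := hlhs.symm
            _ = |∑ j ∈ Finset.univ.erase i, A i j * x j| := by rw [heq]
            _ ≤ ∑ j ∈ Finset.univ.erase i, A i j * |x j| := hsumabs
        have hzero : ∑ j ∈ Finset.univ.erase i, A i j * (c - |x j|) = 0 := by
          have h1 : ∑ j ∈ Finset.univ.erase i, A i j * (c - |x j|) =
              (∑ j ∈ Finset.univ.erase i, A i j * c)
                - ∑ j ∈ Finset.univ.erase i, A i j * |x j| := by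
            rw [← Finset.sum_sub_distrib]
            exact Finset.sum_congr rfl fun j _ => by ring
          have h2 : ∑ j ∈ Finset.univ.erase i, A i j * c = (∑ j, A i j) * c := by
            rw [← Finset.sum_mul, Finset.sum_erase_eq_sub (Finset.mem_univ i), hAdiag,
              sub_zero]
          have hnn : (0:ℝ) ≤ ∑ j ∈ Finset.univ.erase i, A i j * (c - |x j|) :=
            Finset.sum_nonneg fun j _ => mul_nonneg (hA i j) (by linarith [hmax j])
          linarith
        have hterms : ∀ j ∈ Finset.univ.erase i, A i j * (c - |x j|) = 0 :=
          (Finset.sum_eq_zero_iff_of_nonneg fun j _ =>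
            mul_nonneg (hA i j) (by linarith [hmax j])).mp hzero
        intro j hAij
        have hji : j ≠ i := by
          intro h
          rw [h, hAdiag] at hAij
          exact lt_irrefl 0 hAij
        have := hterms j (Finset.mem_erase.mpr ⟨hji, Finset.mem_univ j⟩)
        have : c - |x j| = 0 := by
          rcases mul_eq_zero.mp this with h | h
          · exact absurd h (ne_of_gt hAij)
          · exact h
        linarith
      have hS : ∀ a : Fin N, Relation.TransGen (fun u v : Fin N => 0 < A v u) a i0 →
          |x a| = c := by
        intro a h
        induction h using Relation.TransGen.head_induction_on with
        | single h => exact (key i0 rfl).2 _ h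
        | head h1 _ ih => exact (key _ ih).2 _ h1
      obtain ⟨istar, hbstar⟩ := hbpos
      have hxstar : |x istar| = c := by
        by_cases h : istar = i0
        · rw [h]
        · exact hS istar (hconn istar i0 h)
      have := (key istar hxstar).1
      linarith
    exact (Matrix.isUnit_iff_isUnit_det M).2 (isUnit_iff_ne_zero.2 hdet)
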